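/- arXiv:1210.7635 — 4 statements merged into one kernel-verified Lean document; each statement's English description precedes it below -/
import Mathlib

section
/- Let V be a power-bounded operator on a Hilbert space H (i.e. there exists M such that ‖Vⁿ‖ ≤ M for all n ∈ ℕ). Let F = {φ ∈ H : Vφ = φ} and R = range(1 - V). Then F ∩ closure(R) = {0}. -/
/-- If `V` is a power-bounded operator on a complex Hilbert space `H`,
`F = {φ | V φ = φ}` and `R = range (1 - V)`, then `F ∩ closure R = {0}`. -/
theorem stmt_0 {H : Type*} [NormedAddCommGroup H] [InnerProductSpace ℂ H]
    (V : H →L[ℂ] H) (M : ℝ) (hM : ∀ n : ℕ, ‖V ^ n‖ ≤ M)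
    (φ : H) (hφF : V φ = φ)
    (hφR : φ ∈ closure (Set.range fun x => x - V x)) :
    φ = 0 := by
  have hM0 : 0 ≤ M := le_trans (norm_nonneg _) (hM 0)
  have hpow : ∀ k : ℕ, (V ^ k) φ = φ := by
    intro k
    induction k with
    | zero => simp
    | succ k ih =>
      rw [pow_succ, ContinuousLinearMap.mul_apply, hφF, ih]
  have key : ∀ ε : ℝ, 0 < ε → ‖φ‖ ≤ M * ε := by
    intro ε hε
    rcases Metric.mem_closure_iff.mp hφR ε hε with ⟨ψ, ⟨x, hx⟩, hdist⟩
    have hψ : ‖φ - ψ‖ < ε := by rwa [dist_eq_norm] at hdist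
    have hsum : ∀ n : ℕ, (n • φ : H)
        = (∑ k ∈ Finset.range n, (V ^ k) (φ - ψ)) + (x - (V ^ n) x) := by
      intro n
      have h2 : ∑ k ∈ Finset.range n, (V ^ k) ψ = x - (V ^ n) x := by
        have hk : ∀ k, (V ^ k) ψ = (V ^ k) x - (V ^ (k + 1)) x := by
          intro k
          rw [← hx]
          simp [pow_succ, map_sub]
        simp only [hk]
        rw [Finset.sum_range_sub' (fun k => (V ^ k) x)]
        simp
      calc (n • φ : H) = ∑ k ∈ Finset.range n, (V ^ k) φ := by simp [hpow]
        _ = ∑ k ∈ Finset.range n, ((V ^ k) (φ - ψ) + (V ^ k) ψ) := by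
            simp [map_sub]
        _ = _ := by rw [Finset.sum_add_distrib, h2]
    have hbound : ∀ n : ℕ, 1 ≤ n → ‖φ‖ ≤ M * ε + (1 + M) * ‖x‖ / n := by
      intro n hn
      have hnpos : (0 : ℝ) < n := by exact_mod_cast hn
      have h1 : ‖(n • φ : H)‖ = (n : ℝ) * ‖φ‖ := by
        rw [← Nat.cast_smul_eq_nsmul ℝ, norm_smul]
        simp
      have h2 : ‖∑ k ∈ Finset.range n, (V ^ k) (φ - ψ)‖ ≤ n * (M * ε) := by
        calc ‖∑ k ∈ Finset.range n, (V ^ k) (φ - ψ)‖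
            ≤ ∑ k ∈ Finset.range n, ‖(V ^ k) (φ - ψ)‖ := norm_sum_le _ _
          _ ≤ ∑ k ∈ Finset.range n, M * ε := by
              apply Finset.sum_le_sum
              intro k _
              calc ‖(V ^ k) (φ - ψ)‖ ≤ ‖V ^ k‖ * ‖φ - ψ‖ :=
                    (V ^ k).le_opNorm _
                _ ≤ M * ε := by
                    apply mul_le_mul (hM k) hψ.le (norm_nonneg _) hM0
          _ = n * (M * ε) := by simp [Finset.sum_const, mul_comm]
      have h3 : ‖x - (V ^ n) x‖ ≤ (1 + M) * ‖x‖ := by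
        calc ‖x - (V ^ n) x‖ ≤ ‖x‖ + ‖(V ^ n) x‖ := norm_sub_le _ _
          _ ≤ ‖x‖ + M * ‖x‖ :=
              add_le_add le_rfl (((V ^ n).le_opNorm x).trans
                (mul_le_mul_of_nonneg_right (hM n) (norm_nonneg x)))
          _ = (1 + M) * ‖x‖ := by ring
      have h4 : (n : ℝ) * ‖φ‖ ≤ n * (M * ε) + (1 + M) * ‖x‖ := by
        rw [← h1, hsum n]
        exact (norm_add_le _ _).trans (add_le_add h2 h3)
      rw [div_eq_mul_inv]
      rw [← mul_le_mul_iff_right₀ hnpos]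
      calc (n : ℝ) * ‖φ‖ ≤ n * (M * ε) + (1 + M) * ‖x‖ := h4
        _ = n * (M * ε + (1 + M) * ‖x‖ * (n : ℝ)⁻¹) := by
            field_simp
    have htend : Filter.Tendsto (fun n : ℕ => M * ε + (1 + M) * ‖x‖ / n)
        Filter.atTop (nhds (M * ε)) := by
      have : Filter.Tendsto (fun n : ℕ => (1 + M) * ‖x‖ / n)
          Filter.atTop (nhds 0) :=
        tendsto_const_nhds.div_atTop tendsto_natCast_atTop_atTop
      simpa using tendsto_const_nhds.add this
    exact ge_of_tendsto htend (Filter.eventually_atTop.mpr ⟨1, hbound⟩)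
  by_contra hne
  have hpos : 0 < ‖φ‖ := norm_pos_iff.mpr hne
  have h := key (‖φ‖ / (2 * (M + 1))) (by positivity)
  rw [← mul_div_assoc, le_div_iff₀ (by positivity)] at h
  nlinarith
end

section
/- Let V be a power-bounded operator on a Hilbert space H. Then H decomposes as the direct sum F ⊕ closure(range(1-V)), where F = ker(1-V); i.e. F + closure(range(1-V)) is dense and equals H, with trivial intersection. -/
open scoped ComplexConjugate
open Filter

local notation "⟪" x ", " y "⟫" => @inner ℂ _ _ x y

/-- Quantitative key inequality: if `V` is power bounded with bound `M`, `x` is a fixed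
point of `V` and `u` is in the closure of the range of `1 - V`, then `‖x‖ ≤ M * ‖x + u‖`. -/
lemma keyIneq {H : Type*} [NormedAddCommGroup H] [InnerProductSpace ℂ H]
    (V : H →L[ℂ] H) (M : ℝ) (hM : ∀ n : ℕ, ‖V ^ n‖ ≤ M)
    {x : H} (hx : V x = x) :
    ∀ u ∈ (LinearMap.range ((1 - V : H →L[ℂ] H) : H →ₗ[ℂ] H)).topologicalClosure, ‖x‖ ≤ M * ‖x + u‖ := by
  have hM0 : 0 ≤ M := le_trans (norm_nonneg _) (hM 0)
  have hpow : ∀ n : ℕ, (V ^ n) x = x := by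
    intro n
    induction n with
    | zero => simp
    | succ n ih => rw [pow_succ', ContinuousLinearMap.mul_apply, ih, hx]
  have hVk : ∀ (k : ℕ) (z : H), ‖(V ^ k) z‖ ≤ M * ‖z‖ := fun k z =>
    le_trans ((V ^ k).le_opNorm z) (mul_le_mul_of_nonneg_right (hM k) (norm_nonneg z))
  have hrange : ∀ u ∈ LinearMap.range ((1 - V : H →L[ℂ] H) : H →ₗ[ℂ] H), ‖x‖ ≤ M * ‖x + u‖ := by
    rintro u ⟨y, rfl⟩
    set u : H := (1 - V) y with hu
    have key : ∀ n : ℕ, (n : ℝ) * ‖x‖ ≤ (n : ℝ) * (M * ‖x + u‖) + (1 + M) * ‖y‖ := by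
      intro n
      have hterm : ∀ k : ℕ, (V ^ k) (x + u) = x + ((V ^ k) y - (V ^ (k + 1)) y) := by
        intro k
        have : (V ^ k) ((V : H →L[ℂ] H) y) = (V ^ (k + 1)) y := by
          rw [pow_succ, ContinuousLinearMap.mul_apply]
        simp [hu, map_add, map_sub, hpow k, ContinuousLinearMap.sub_apply, this]
      have hsum : ∑ k ∈ Finset.range n, (V ^ k) (x + u)
          = n • x + (y - (V ^ n) y) := by
        calc ∑ k ∈ Finset.range n, (V ^ k) (x + u)
            = ∑ k ∈ Finset.range n, (x + ((V ^ k) y - (V ^ (k + 1)) y)) := by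
              exact Finset.sum_congr rfl fun k _ => hterm k
          _ = n • x + (y - (V ^ n) y) := by
              rw [Finset.sum_add_distrib, Finset.sum_const, Finset.card_range,
                Finset.sum_range_sub' (fun k => (V ^ k) y)]
              simp
      have h1 : ‖(n • x : H)‖ = (n : ℝ) * ‖x‖ := by
        rw [← Nat.cast_smul_eq_nsmul ℝ n x, norm_smul]
        simp
      have h2 : ‖y - (V ^ n) y‖ ≤ (1 + M) * ‖y‖ := by
        calc ‖y - (V ^ n) y‖ ≤ ‖y‖ + ‖(V ^ n) y‖ := norm_sub_le _ _
          _ ≤ ‖y‖ + M * ‖y‖ := by linarith [hVk n y]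
          _ = (1 + M) * ‖y‖ := by ring
      have h3 : ‖∑ k ∈ Finset.range n, (V ^ k) (x + u)‖ ≤ (n : ℝ) * (M * ‖x + u‖) := by
        calc ‖∑ k ∈ Finset.range n, (V ^ k) (x + u)‖
            ≤ ∑ k ∈ Finset.range n, ‖(V ^ k) (x + u)‖ := norm_sum_le _ _
          _ ≤ ∑ _k ∈ Finset.range n, M * ‖x + u‖ :=
              Finset.sum_le_sum fun k _ => hVk k (x + u)
          _ = (n : ℝ) * (M * ‖x + u‖) := by
              rw [Finset.sum_const, Finset.card_range, nsmul_eq_mul]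
      calc (n : ℝ) * ‖x‖ = ‖(n • x : H)‖ := h1.symm
        _ ≤ ‖n • x + (y - (V ^ n) y)‖ + ‖y - (V ^ n) y‖ := by
            have := norm_sub_le (n • x + (y - (V ^ n) y)) (y - (V ^ n) y)
            simpa using this
        _ ≤ (n : ℝ) * (M * ‖x + u‖) + (1 + M) * ‖y‖ := by
            rw [← hsum] at *
            exact add_le_add h3 h2
    refine le_of_forall_pos_le_add fun ε hε => ?_
    set C : ℝ := (1 + M) * ‖y‖ with hC
    have hC0 : 0 ≤ C := mul_nonneg (by linarith) (norm_nonneg _)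
    obtain ⟨n, hn⟩ := exists_nat_gt (C / ε)
    have hnpos : (0 : ℝ) < n := lt_of_le_of_lt (div_nonneg hC0 hε.le) hn
    have hCn : C < (n : ℝ) * ε := by
      rw [div_lt_iff₀ hε] at hn
      linarith
    have := key n
    have hineq : (n : ℝ) * ‖x‖ ≤ (n : ℝ) * (M * ‖x + u‖) + (n : ℝ) * ε := by
      linarith
    have := (mul_le_mul_iff_of_pos_left hnpos).mp (by linarith [hineq] : (n : ℝ) * ‖x‖ ≤ (n : ℝ) * (M * ‖x + u‖ + ε))
    exact this
  intro u hu
  have hcl : IsClosed {u : H | ‖x‖ ≤ M * ‖x + u‖} :=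
    isClosed_le continuous_const
      (continuous_const.mul ((continuous_const.add continuous_id).norm))
  have hsub : (LinearMap.range ((1 - V : H →L[ℂ] H) : H →ₗ[ℂ] H) : Set H) ⊆ {u : H | ‖x‖ ≤ M * ‖x + u‖} :=
    fun v hv => hrange v hv
  have : u ∈ closure (LinearMap.range ((1 - V : H →L[ℂ] H) : H →ₗ[ℂ] H) : Set H) := hu
  exact closure_minimal hsub hcl this

/-- A power-bounded operator `V` on a Hilbert space yields the decomposition
`H = ker(1-V) ⊕ closure(range(1-V))`: the sum is all of `H` and the
intersection is trivial. -/
theorem stmt_1 {H : Type*} [NormedAddCommGroup H] [InnerProductSpace ℂ H]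
    [CompleteSpace H]
    (V : H →L[ℂ] H) (M : ℝ) (hM : ∀ n : ℕ, ‖V ^ n‖ ≤ M) :
    (LinearMap.ker ((1 - V : H →L[ℂ] H) : H →ₗ[ℂ] H) ⊔
        (LinearMap.range ((1 - V : H →L[ℂ] H) : H →ₗ[ℂ] H)).topologicalClosure = (⊤ : Submodule ℂ H)) ∧
      LinearMap.ker ((1 - V : H →L[ℂ] H) : H →ₗ[ℂ] H) ⊓
        (LinearMap.range ((1 - V : H →L[ℂ] H) : H →ₗ[ℂ] H)).topologicalClosure = (⊥ : Submodule ℂ H) := by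
  set K : Submodule ℂ H := LinearMap.ker ((1 - V : H →L[ℂ] H) : H →ₗ[ℂ] H) with hK
  set R : Submodule ℂ H := (LinearMap.range ((1 - V : H →L[ℂ] H) : H →ₗ[ℂ] H)).topologicalClosure with hR
  have hM0 : 0 ≤ M := le_trans (norm_nonneg _) (hM 0)
  have hker_fixed : ∀ x, x ∈ K → V x = x := by
    intro x hx
    have h : (1 - V) x = 0 := hx
    rw [ContinuousLinearMap.sub_apply, ContinuousLinearMap.one_apply, sub_eq_zero] at h
    exact h.symm
  -- intersection is trivial
  have hinf : K ⊓ R = ⊥ := by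
    rw [eq_bot_iff]
    rintro x ⟨hxK, hxR⟩
    have hfix := hker_fixed x hxK
    have := keyIneq V M hM hfix (-x) (neg_mem hxR)
    simp only [add_neg_cancel, norm_zero, mul_zero] at this
    have : x = 0 := norm_le_zero_iff.mp this
    simpa [this]
  refine ⟨?_, hinf⟩
  -- the adjoint is also power bounded
  set A : H →L[ℂ] H := ContinuousLinearMap.adjoint V with hA
  have hMA : ∀ n : ℕ, ‖A ^ n‖ ≤ M := by
    intro n
    have : A ^ n = star V ^ n := by rw [ContinuousLinearMap.star_eq_adjoint]
    rw [this, ← star_pow, norm_star]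
    exact hM n
  -- the sum is closed
  have hclosed : (K ⊔ R).topologicalClosure ≤ K ⊔ R := by
    intro x hx
    have hx' : x ∈ closure ((K ⊔ R : Submodule ℂ H) : Set H) := hx
    obtain ⟨s, hs, hlim⟩ := mem_closure_iff_seq_limit.mp hx'
    choose a haK r hrR hsum using fun n => Submodule.mem_sup.mp (hs n)
    have hCauchy : CauchySeq a := by
      rw [Metric.cauchySeq_iff]
      intro ε hε
      have hsC : CauchySeq s := hlim.cauchySeq
      have hε' : 0 < ε / (M + 1) := div_pos hε (by linarith)
      obtain ⟨N, hN⟩ := Metric.cauchySeq_iff.mp hsC (ε / (M + 1)) hε'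
      refine ⟨N, fun m hm n hn => ?_⟩
      have hfix : V (a m - a n) = a m - a n :=
        hker_fixed _ (sub_mem (haK m) (haK n))
      have hmem : r m - r n ∈ R := sub_mem (hrR m) (hrR n)
      have hkey := keyIneq V M hM hfix (r m - r n) hmem
      have heq : a m - a n + (r m - r n) = s m - s n := by
        rw [← hsum m, ← hsum n]; abel
      rw [heq] at hkey
      have h1 : dist (a m) (a n) ≤ (M + 1) * dist (s m) (s n) := by
        rw [dist_eq_norm, dist_eq_norm]
        calc ‖a m - a n‖ ≤ M * ‖s m - s n‖ := hkey
          _ ≤ (M + 1) * ‖s m - s n‖ := by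
              apply mul_le_mul_of_nonneg_right (by linarith) (norm_nonneg _)
      have h2 := hN m hm n hn
      calc dist (a m) (a n) ≤ (M + 1) * dist (s m) (s n) := h1
        _ < (M + 1) * (ε / (M + 1)) := by
            apply mul_lt_mul_of_pos_left h2 (by linarith)
        _ = ε := by field_simp
    obtain ⟨aL, haL⟩ := cauchySeq_tendsto_of_complete hCauchy
    have haLK : aL ∈ K := by
      have hKc : IsClosed (K : Set H) := ContinuousLinearMap.isClosed_ker (1 - V)
      exact hKc.mem_of_tendsto haL (Filter.Eventually.of_forall haK)
    have hrlim : Tendsto (fun n => s n - a n) atTop (nhds (x - aL)) :=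
      hlim.sub haL
    have hxaR : x - aL ∈ R := by
      have hRc : IsClosed (R : Set H) := (LinearMap.range ((1 - V : H →L[ℂ] H) : H →ₗ[ℂ] H)).isClosed_topologicalClosure
      refine hRc.mem_of_tendsto hrlim (Filter.Eventually.of_forall fun n => ?_)
      have : s n - a n = r n := by rw [← hsum n]; abel
      rw [this]; exact hrR n
    exact Submodule.mem_sup.mpr ⟨aL, haLK, x - aL, hxaR, by abel⟩
  -- the sum is dense
  have hdense : (K ⊔ R)ᗮ = ⊥ := by
    rw [Submodule.eq_bot_iff]
    intro x hx
    have hxK : ∀ u ∈ K, ⟪u, x⟫ = 0 := fun u hu =>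
      (Submodule.mem_orthogonal _ x).mp hx u (Submodule.mem_sup_left hu)
    have hxR : ∀ u ∈ (LinearMap.range ((1 - V : H →L[ℂ] H) : H →ₗ[ℂ] H) : Submodule ℂ H), ⟪u, x⟫ = 0 := fun u hu =>
      (Submodule.mem_orthogonal _ x).mp hx u
        (Submodule.mem_sup_right (Submodule.le_topologicalClosure _ hu))
    -- x is a fixed point of the adjoint A
    have hAx : A x = x := by
      have h0 : ∀ y : H, ⟪y, x - A x⟫ = 0 := by
        intro y
        have h1 : ⟪y, A x⟫ = ⟪V y, x⟫ := by
          rw [hA, ContinuousLinearMap.adjoint_inner_right]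
        have h2 : ⟪(1 - V) y, x⟫ = 0 := hxR _ ⟨y, rfl⟩
        rw [inner_sub_right, h1]
        rw [ContinuousLinearMap.sub_apply, ContinuousLinearMap.one_apply,
          inner_sub_left] at h2
        linear_combination h2
      have := h0 (x - A x)
      rw [inner_self_eq_zero] at this
      rw [sub_eq_zero] at this
      exact this.symm
    -- x is in the closure of the range of (1 - A)
    have hxRA : x ∈ (LinearMap.range ((1 - A : H →L[ℂ] H) : H →ₗ[ℂ] H)).topologicalClosure := by
      rw [← Submodule.orthogonal_orthogonal_eq_closure]
      rw [Submodule.mem_orthogonal]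
      intro u hu
      -- u is orthogonal to range (1 - A), hence u ∈ K
      have huK : u ∈ K := by
        have h0 : ∀ y : H, ⟪y, u - V u⟫ = 0 := by
          intro y
          have h1 : ⟪(1 - A) y, u⟫ = 0 :=
            (Submodule.mem_orthogonal _ u).mp hu _ ⟨y, rfl⟩
          rw [ContinuousLinearMap.sub_apply, ContinuousLinearMap.one_apply,
            inner_sub_left] at h1
          have h2 : ⟪A y, u⟫ = ⟪y, V u⟫ := by
            rw [hA, ContinuousLinearMap.adjoint_inner_left]
          rw [inner_sub_right, ← h2]
          linear_combination h1
        have := h0 (u - V u)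
        rw [inner_self_eq_zero] at this
        show (1 - V) u = 0
        simpa [ContinuousLinearMap.sub_apply] using this
      exact hxK u huK
    -- apply the key inequality to A
    have hkey := keyIneq A M hMA hAx (-x) (neg_mem hxRA)
    simp only [add_neg_cancel, norm_zero, mul_zero] at hkey
    exact norm_le_zero_iff.mp hkey
  have : (K ⊔ R).topologicalClosure = ⊤ :=
    Submodule.topologicalClosure_eq_top_iff.mpr hdense
  exact le_antisymm le_top (this ▸ hclosed)
end

section
/- Let (Ω, F, P) be a probability space and {X_n}_{n≥1} a sequence of random variables with values in a finite set Σ, with decaying correlations: there is a function C : ℕ → ℝ₊ with C(d) → 0 such that |P(A∩B) − P(A)P(B)| ≤ C(m−l) for all 1 ≤ k ≤ l < m ≤ n, A ∈ σ(X_k,…,X_l), B ∈ σ(X_m,…,X_n). Then every event A in the tail sigma-algebra T = ∩_{n≥1} σ(X_n, X_{n+1}, …) satisfies P(A) = 0 or P(A) = 1. -/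
open Filter MeasureTheory
open scoped symmDiff

lemma abs_toReal_sub_le_symmDiff {Ω : Type*} [MeasurableSpace Ω] (P : Measure Ω)
    [IsFiniteMeasure P] (A B : Set Ω) :
    |(P A).toReal - (P B).toReal| ≤ (P (A ∆ B)).toReal := by
  have key : ∀ s t : Set Ω, (P s).toReal ≤ (P t).toReal + (P (s ∆ t)).toReal := by
    intro s t
    have hsub : s ⊆ t ∪ s ∆ t := by
      intro x hx
      by_cases hxt : x ∈ t
      · exact Or.inl hxt
      · exact Or.inr (Or.inl ⟨hx, hxt⟩)
    have h1 : P s ≤ P t + P (s ∆ t) :=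
      (measure_mono hsub).trans (measure_union_le _ _)
    have h2 : (P s).toReal ≤ (P t + P (s ∆ t)).toReal :=
      ENNReal.toReal_mono (by finiteness) h1
    rwa [ENNReal.toReal_add (measure_ne_top _ _) (measure_ne_top _ _)] at h2
  rw [abs_sub_le_iff]
  constructor
  · linarith [key A B]
  · have := key B A
    rw [symmDiff_comm] at this
    linarith

/-- Approximation of sets measurable w.r.t. the σ-algebra generated by
`X i`, `i ≥ m₀`, by sets measurable w.r.t. finitely many of the `X i`. -/
lemma approx_by_finite {Ω : Type*} [mΩ : MeasurableSpace Ω] (P : Measure Ω)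
    [IsProbabilityMeasure P]
    {S : Type*} [mS : MeasurableSpace S]
    (X : ℕ → Ω → S) (hX : ∀ n, Measurable (X n)) (m₀ : ℕ) {A : Set Ω}
    (hA : MeasurableSet[⨆ i ∈ Set.Ici m₀, MeasurableSpace.comap (X i) mS] A)
    (ε : ℝ) (hε : 0 < ε) :
    ∃ n B, MeasurableSet[⨆ i ∈ Set.Icc m₀ n, MeasurableSpace.comap (X i) mS] B ∧
      (P (A ∆ B)).toReal < ε := by
  set F : ℕ → MeasurableSpace Ω :=
    fun n => ⨆ i ∈ Set.Icc m₀ n, MeasurableSpace.comap (X i) mS with hF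
  have hmono : Monotone F := by
    intro a b hab
    exact iSup₂_le fun i hi => le_iSup₂ (f := fun i (_ : i ∈ Set.Icc m₀ b) =>
      MeasurableSpace.comap (X i) mS) i ⟨hi.1, hi.2.trans hab⟩
  set 𝒜 : Set (Set Ω) := {s | ∃ n, MeasurableSet[F n] s} with h𝒜
  have halg : IsSetAlgebra 𝒜 := by
    refine ⟨⟨0, @MeasurableSet.empty Ω (F 0)⟩, ?_, ?_⟩
    · rintro s ⟨n, hs⟩
      exact ⟨n, hs.compl⟩
    · rintro s t ⟨n, hs⟩ ⟨k, ht⟩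
      have h1 : F n ≤ F (max n k) := hmono (le_max_left n k)
      have h2 : F k ≤ F (max n k) := hmono (le_max_right n k)
      exact ⟨max n k, (h1 _ hs).union (h2 _ ht)⟩
  have hG : (⨆ i ∈ Set.Ici m₀, MeasurableSpace.comap (X i) mS) = ⨆ n, F n := by
    apply le_antisymm
    · refine iSup₂_le fun i hi => ?_
      refine le_trans ?_ (le_iSup F i)
      exact le_iSup₂ (f := fun j (_ : j ∈ Set.Icc m₀ i) =>
        MeasurableSpace.comap (X j) mS) i ⟨hi, le_refl i⟩
    · exact iSup_le fun n => iSup₂_le fun i hi =>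
        le_iSup₂ (f := fun j (_ : j ∈ Set.Ici m₀) =>
          MeasurableSpace.comap (X j) mS) i hi.1
  have hGle : (⨆ n, F n) ≤ mΩ :=
    iSup_le fun n => iSup₂_le fun i _ => (hX i).comap_le
  have hgen : (⨆ n, F n) = MeasurableSpace.generateFrom 𝒜 :=
    MeasurableSpace.measurableSpace_iSup_eq F
  have hdense := @Measure.MeasureDense.of_generateFrom_isSetAlgebra_finite Ω
    (⨆ n, F n) (P.trim hGle) 𝒜 (isFiniteMeasure_trim hGle) halg hgen
  have hA' : MeasurableSet[⨆ n, F n] A := hG ▸ hA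
  have hfin : P.trim hGle A ≠ ⊤ :=
    @measure_ne_top Ω (⨆ n, F n) (P.trim hGle) (isFiniteMeasure_trim hGle) A
  have happrox := @Measure.MeasureDense.approx Ω (⨆ n, F n) (P.trim hGle) 𝒜 hdense A hA' hfin ε hε
  obtain ⟨t, ⟨n, htn⟩, hlt⟩ := happrox
  have hFn : F n ≤ ⨆ n, F n := le_iSup F n
  have hmeas : MeasurableSet[⨆ n, F n] (A ∆ t) :=
    MeasurableSet.symmDiff hA' (hFn _ htn)
  rw [trim_measurableSet_eq hGle hmeas] at hlt
  refine ⟨n, t, htn, ?_⟩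
  exact ENNReal.toReal_lt_of_lt_ofReal hlt

/-- Zero-one law for a process with decaying correlations: if the random
variables `X n` take values in a finite set and correlations between past and
future events decay (uniformly, via a function `C` tending to `0`), then
every tail event has probability `0` or `1`. -/
theorem stmt_5 {Ω : Type*} [MeasurableSpace Ω] (P : Measure Ω)
    [IsProbabilityMeasure P]
    {S : Type*} [Fintype S] [mS : MeasurableSpace S]
    (X : ℕ → Ω → S) (hX : ∀ n, Measurable (X n))
    (C : ℕ → ℝ) (hC0 : ∀ d, 0 ≤ C d) (hC : Tendsto C atTop (nhds 0))
    (hcorr : ∀ k l m n : ℕ, 1 ≤ k → k ≤ l → l < m → m ≤ n →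
      ∀ A B : Set Ω,
        MeasurableSet[⨆ i ∈ Set.Icc k l, MeasurableSpace.comap (X i) mS] A →
        MeasurableSet[⨆ i ∈ Set.Icc m n, MeasurableSpace.comap (X i) mS] B →
        |(P (A ∩ B)).toReal - (P A).toReal * (P B).toReal| ≤ C (m - l))
    (A : Set Ω)
    (hA : ∀ n : ℕ, 1 ≤ n →
      MeasurableSet[⨆ i ∈ Set.Ici n, MeasurableSpace.comap (X i) mS] A) :
    P A = 0 ∨ P A = 1 := by
  set x : ℝ := (P A).toReal with hx
  have hx0 : 0 ≤ x := ENNReal.toReal_nonneg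
  have hx1 : x ≤ 1 := by
    rw [hx]
    exact ENNReal.toReal_le_of_le_ofReal zero_le_one (by simpa using prob_le_one)
  -- main estimate
  have key : x = x * x := by
    have hest : ∀ ε : ℝ, 0 < ε → |x - x * x| ≤ 5 * ε := by
      intro ε hε
      -- approximate A by a past event B
      obtain ⟨n₁, B, hB, hBε⟩ := approx_by_finite P X hX 1 (hA 1 le_rfl) ε hε
      set l := max n₁ 1 with hl
      have hle1 : (⨆ i ∈ Set.Icc 1 n₁, MeasurableSpace.comap (X i) mS)
          ≤ ⨆ i ∈ Set.Icc 1 l, MeasurableSpace.comap (X i) mS :=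
        iSup₂_le fun i hi => le_iSup₂ (f := fun j (_ : j ∈ Set.Icc 1 l) =>
          MeasurableSpace.comap (X j) mS) i ⟨hi.1, hi.2.trans (le_max_left _ _)⟩
      have hB' : MeasurableSet[⨆ i ∈ Set.Icc 1 l, MeasurableSpace.comap (X i) mS] B :=
        hle1 _ hB
      -- choose the gap
      obtain ⟨d, hd⟩ := (hC.eventually (eventually_lt_nhds hε)).exists_forall_of_atTop
      set m := l + max d 1 with hm
      have hlm : l < m := by
        have : 1 ≤ max d 1 := le_max_right _ _
        omega
      have hCm : C (m - l) < ε := by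
        have : m - l = max d 1 := by omega
        rw [this]
        exact hd _ (le_max_left _ _)
      -- approximate A by a future event B'
      have hm1 : 1 ≤ m := by omega
      obtain ⟨n₂, B', hB'', hB'ε⟩ := approx_by_finite P X hX m (hA m hm1) ε hε
      set nn := max n₂ m with hnn
      have hle2 : (⨆ i ∈ Set.Icc m n₂, MeasurableSpace.comap (X i) mS)
          ≤ ⨆ i ∈ Set.Icc m nn, MeasurableSpace.comap (X i) mS :=
        iSup₂_le fun i hi => le_iSup₂ (f := fun j (_ : j ∈ Set.Icc m nn) =>
          MeasurableSpace.comap (X j) mS) i ⟨hi.1, hi.2.trans (le_max_left _ _)⟩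
      have hB'2 : MeasurableSet[⨆ i ∈ Set.Icc m nn, MeasurableSpace.comap (X i) mS] B' :=
        hle2 _ hB''
      have hcorr' := hcorr 1 l m nn le_rfl (le_max_right _ _) hlm (le_max_right _ _)
        B B' hB' hB'2
      -- pass to real estimates
      set b : ℝ := (P B).toReal with hb
      set b' : ℝ := (P B').toReal with hb'
      have hABr : |x - b| < ε := lt_of_le_of_lt (abs_toReal_sub_le_symmDiff P A B) hBε
      have hAB'r : |x - b'| < ε := lt_of_le_of_lt (abs_toReal_sub_le_symmDiff P A B') hB'ε
      have hb0 : 0 ≤ b := ENNReal.toReal_nonneg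
      have hb1 : b ≤ 1 := by
        rw [hb]; exact ENNReal.toReal_le_of_le_ofReal zero_le_one (by simpa using prob_le_one)
      have hb'1 : b' ≤ 1 := by
        rw [hb']; exact ENNReal.toReal_le_of_le_ofReal zero_le_one (by simpa using prob_le_one)
      have hb'0 : 0 ≤ b' := ENNReal.toReal_nonneg
      -- |x - P(B ∩ B')| ≤ 2ε
      have hsub : A ∆ (B ∩ B') ⊆ (A ∆ B) ∪ (A ∆ B') := by
        rintro y (⟨hyA, hyBB'⟩ | ⟨⟨hyB, hyB'⟩, hyA⟩)
        · by_cases hyB : y ∈ B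
          · refine Or.inr (Or.inl ⟨hyA, fun hyB' => hyBB' ⟨hyB, hyB'⟩⟩)
          · exact Or.inl (Or.inl ⟨hyA, hyB⟩)
        · exact Or.inl (Or.inr ⟨hyB, hyA⟩)
      have hI : |x - (P (B ∩ B')).toReal| < 2 * ε := by
        refine lt_of_le_of_lt (abs_toReal_sub_le_symmDiff P A (B ∩ B')) ?_
        have h1 : P (A ∆ (B ∩ B')) ≤ P (A ∆ B) + P (A ∆ B') :=
          (measure_mono hsub).trans (measure_union_le _ _)
        have h2 : (P (A ∆ (B ∩ B'))).toReal ≤ (P (A ∆ B)).toReal + (P (A ∆ B')).toReal := by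
          have := ENNReal.toReal_mono (by finiteness) h1
          rwa [ENNReal.toReal_add (measure_ne_top _ _) (measure_ne_top _ _)] at this
        linarith
      have hII : |(P (B ∩ B')).toReal - b * b'| < ε := lt_of_le_of_lt hcorr' hCm
      have hIII : |b * b' - x * x| ≤ 2 * ε := by
        have : b * b' - x * x = b * (b' - x) + x * (b - x) := by ring
        rw [this]
        calc |b * (b' - x) + x * (b - x)| ≤ |b * (b' - x)| + |x * (b - x)| := abs_add_le _ _
          _ = |b| * |b' - x| + |x| * |b - x| := by rw [abs_mul, abs_mul]
          _ ≤ 1 * ε + 1 * ε := by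
              have e1 : |b| ≤ 1 := abs_le.2 ⟨by linarith, hb1⟩
              have e2 : |x| ≤ 1 := abs_le.2 ⟨by linarith, hx1⟩
              have e3 : |b' - x| ≤ ε := by rw [abs_sub_comm]; exact le_of_lt hAB'r
              have e4 : |b - x| ≤ ε := by rw [abs_sub_comm]; exact le_of_lt hABr
              gcongr
          _ = 2 * ε := by ring
      have tri : |x - x * x| ≤ |x - (P (B ∩ B')).toReal| + |(P (B ∩ B')).toReal - b * b'|
          + |b * b' - x * x| :=
        (abs_sub_le _ _ _).trans (by linarith [abs_sub_le ((P (B ∩ B')).toReal) (b * b') (x * x)])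
      linarith
    have h0 : |x - x * x| ≤ 0 := by
      refine le_of_forall_pos_le_add fun ε hε => ?_
      have := hest (ε / 5) (by linarith)
      linarith
    have := abs_nonneg (x - x * x)
    have : |x - x * x| = 0 := le_antisymm h0 this
    have := abs_eq_zero.mp this
    linarith
  -- conclude
  have : x * (1 - x) = 0 := by ring_nf; linarith [key]
  rcases mul_eq_zero.mp this with h | h
  · left
    rw [hx] at h
    exact (ENNReal.toReal_eq_zero_iff _).mp h |>.resolve_right (measure_ne_top _ _)
  · right
    have hx_eq : x = 1 := by linarith
    rw [hx] at hx_eq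
    have := (ENNReal.toReal_eq_one_iff _).mp hx_eq
    exact this
end

section
/- Let T and T_S be operators on a finite-dimensional Hilbert space H with ‖T^a T_S^b‖ ≤ M for all a, b ≥ 0 (uniform power bounds for mixed products), and let ψ ∈ H. Suppose the joint measurement probabilities satisfy P(X_n ∈ S for n = k,…,k+l) = ⟨ψ, T^{k−1} T_S^{l+1} ψ⟩ for all k, l. Then P(X_n ∈ S eventually) = ⟨ψ, Π Π_S ψ⟩, where Π and Π_S are the Riesz projections of T and T_S at the eigenvalue 1 (taken to be 0 if 1 is not an eigenvalue). -/
open Filter MeasureTheory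
open scoped ComplexInnerProductSpace Topology

section OpAux

variable {H : Type*} [NormedAddCommGroup H] [InnerProductSpace ℂ H]

private lemma two_step (A : H →L[ℂ] H) (M : ℝ) (hA : ∀ n : ℕ, ‖A ^ n‖ ≤ M)
    (w : H) (h2 : (1 - A) ((1 - A) w) = 0) : (1 - A) w = 0 := by
  set y := (1 - A) w with hy
  have hAy : A y = y := by
    have h : y - A y = 0 := by
      simpa [ContinuousLinearMap.sub_apply] using h2
    rw [sub_eq_zero] at h; exact h.symm
  have hAw : A w = w - y := by
    rw [hy]; simp [ContinuousLinearMap.sub_apply]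
  have hpow : ∀ n : ℕ, (A ^ n) w = w - (n : ℂ) • y := by
    intro n
    induction n with
    | zero => simp
    | succ n ih =>
      rw [pow_succ', ContinuousLinearMap.mul_apply, ih]
      rw [map_sub, _root_.map_smul, hAy, hAw]
      push_cast
      module
  have hbound : ∀ n : ℕ, (n : ℝ) * ‖y‖ ≤ (1 + M) * ‖w‖ := by
    intro n
    have h1 : ‖(n : ℂ) • y‖ = (n : ℝ) * ‖y‖ := by
      rw [norm_smul]; simp
    have h2' : (n : ℂ) • y = w - (A ^ n) w := by rw [hpow n]; abel
    have h3 : ‖(A ^ n) w‖ ≤ M * ‖w‖ :=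
      le_trans ((A ^ n).le_opNorm w)
        (mul_le_mul_of_nonneg_right (hA n) (norm_nonneg w))
    calc (n : ℝ) * ‖y‖ = ‖w - (A ^ n) w‖ := by rw [← h1, h2']
      _ ≤ ‖w‖ + ‖(A ^ n) w‖ := norm_sub_le _ _
      _ ≤ ‖w‖ + M * ‖w‖ := by linarith
      _ = (1 + M) * ‖w‖ := by ring
  have hy0 : y = 0 := by
    by_contra hne
    have hpos : 0 < ‖y‖ := norm_pos_iff.mpr hne
    obtain ⟨n, hn⟩ := exists_nat_gt (((1 + M) * ‖w‖) / ‖y‖)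
    have := hbound n
    rw [div_lt_iff₀ hpos] at hn
    linarith
  exact hy0

private lemma fix_of_pow (A : H →L[ℂ] H) (M : ℝ) (hA : ∀ n : ℕ, ‖A ^ n‖ ≤ M)
    (d : ℕ) (u : H) (hu : ((1 - A) ^ d) u = 0) : A u = u := by
  have key : ∀ j : ℕ, ∀ v : H, ((1 - A) ^ (j + 1)) v = 0 → (1 - A) v = 0 := by
    intro j
    induction j with
    | zero => intro v hv; simpa using hv
    | succ j ih =>
      intro v hv
      apply ih
      have h2 : (1 - A) ((1 - A) (((1 - A) ^ j) v)) = 0 := by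
        have : ((1 - A) ^ (j + 2)) v
            = (1 - A) ((1 - A) (((1 - A) ^ j) v)) := by
          rw [show j + 2 = 1 + (1 + j) by ring, pow_add, pow_add, pow_one]
          simp [ContinuousLinearMap.mul_apply]
        rw [← this]; exact hv
      have := two_step A M hA _ h2
      rw [pow_succ', ContinuousLinearMap.mul_apply]
      exact this
  rcases Nat.eq_zero_or_pos d with hd | hd
  · subst hd
    simp only [pow_zero, ContinuousLinearMap.one_apply] at hu
    rw [hu]; simp
  · obtain ⟨e, rfl⟩ : ∃ e, d = e + 1 := ⟨d - 1, (Nat.succ_pred_eq_of_pos hd).symm⟩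
    have h := key e u hu
    rw [ContinuousLinearMap.sub_apply, ContinuousLinearMap.one_apply, sub_eq_zero] at h
    exact h.symm

private lemma telescope (A : H →L[ℂ] H) (w : H) (N : ℕ) :
    ∑ n ∈ Finset.range N, (A ^ n) ((1 - A) w) = w - (A ^ N) w := by
  induction N with
  | zero => simp
  | succ N ih =>
    rw [Finset.sum_range_succ, ih]
    have h : (A ^ N) ((1 - A) w) = (A ^ N) w - (A ^ (N + 1)) w := by
      rw [pow_succ, ContinuousLinearMap.mul_apply]
      simp [ContinuousLinearMap.sub_apply]
    rw [h]; abel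

private lemma cesaro_proj (A Q : H →L[ℂ] H) (M : ℝ) (hA : ∀ n : ℕ, ‖A ^ n‖ ≤ M)
    (hQ : Q * Q = Q) (d : ℕ) (hd : Subsingleton H ∨ 0 < d)
    (hrange : LinearMap.range (Q : H →ₗ[ℂ] H) = LinearMap.ker (((1 - A) ^ d : H →L[ℂ] H) : H →ₗ[ℂ] H))
    (hker : LinearMap.ker (Q : H →ₗ[ℂ] H) = LinearMap.range (((1 - A) ^ d : H →L[ℂ] H) : H →ₗ[ℂ] H)) (x : H) :
    Tendsto (fun N : ℕ => (N : ℝ)⁻¹ • ∑ n ∈ Finset.range N, (A ^ n) x)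
      atTop (𝓝 (Q x)) := by
  rcases hd with hsub | hd
  · have h : (fun N : ℕ => (N : ℝ)⁻¹ • ∑ n ∈ Finset.range N, (A ^ n) x)
        = fun _ => Q x := funext fun _ => Subsingleton.elim _ _
    rw [h]; exact tendsto_const_nhds
  -- fixed points
  have hfixQ : ∀ z : H, A (Q z) = Q z := by
    intro z
    have hz : Q z ∈ LinearMap.ker (((1 - A) ^ d : H →L[ℂ] H) : H →ₗ[ℂ] H) := by
      rw [← hrange]; exact LinearMap.mem_range_self _ z
    exact fix_of_pow A M hA d (Q z) hz
  have hpowQ : ∀ n : ℕ, ∀ z : H, (A ^ n) (Q z) = Q z := by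
    intro n z
    induction n with
    | zero => simp
    | succ n ih => rw [pow_succ', ContinuousLinearMap.mul_apply, ih, hfixQ]
  -- decomposition
  have hmem : x - Q x ∈ LinearMap.range (((1 - A) ^ d : H →L[ℂ] H) : H →ₗ[ℂ] H) := by
    rw [← hker, LinearMap.mem_ker, map_sub]
    have : Q (Q x) = Q x := by
      rw [← ContinuousLinearMap.mul_apply, hQ]
    rw [ContinuousLinearMap.coe_coe, this, sub_self]
  obtain ⟨z, hz⟩ := hmem
  obtain ⟨e, rfl⟩ : ∃ e, d = e + 1 := ⟨d - 1, (Nat.succ_pred_eq_of_pos hd).symm⟩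
  set w := ((1 - A) ^ e) z with hw
  have hzw : x - Q x = (1 - A) w := by
    rw [hw, ← ContinuousLinearMap.mul_apply, ← pow_succ']
    exact hz.symm
  -- part 1
  have h1 : Tendsto (fun N : ℕ => (N : ℝ)⁻¹ • ∑ n ∈ Finset.range N, (A ^ n) (Q x))
      atTop (𝓝 (Q x)) := by
    have heq : ∀ᶠ N : ℕ in atTop,
        (N : ℝ)⁻¹ • ∑ n ∈ Finset.range N, (A ^ n) (Q x) = Q x := by
      filter_upwards [Ici_mem_atTop 1] with N hN
      have hN0 : (N : ℝ) ≠ 0 := Nat.cast_ne_zero.mpr (Nat.one_le_iff_ne_zero.mp hN)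
      have : ∑ n ∈ Finset.range N, (A ^ n) (Q x) = (N : ℕ) • Q x := by
        rw [Finset.sum_congr rfl fun n _ => hpowQ n x]
        simp
      rw [this, ← Nat.cast_smul_eq_nsmul ℝ, smul_smul, inv_mul_cancel₀ hN0, one_smul]
    exact (tendsto_congr' heq).mpr tendsto_const_nhds
  -- part 2
  have h2 : Tendsto (fun N : ℕ => (N : ℝ)⁻¹ • ∑ n ∈ Finset.range N, (A ^ n) (x - Q x))
      atTop (𝓝 0) := by
    have heq : ∀ N : ℕ, (N : ℝ)⁻¹ • ∑ n ∈ Finset.range N, (A ^ n) (x - Q x)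
        = (N : ℝ)⁻¹ • (w - (A ^ N) w) := by
      intro N
      rw [hzw, telescope]
    have hnorm : ∀ N : ℕ, ‖(N : ℝ)⁻¹ • (w - (A ^ N) w)‖ ≤ (N : ℝ)⁻¹ * ((1 + M) * ‖w‖) := by
      intro N
      rw [norm_smul]
      have h3 : ‖(A ^ N) w‖ ≤ M * ‖w‖ :=
        le_trans ((A ^ N).le_opNorm w)
          (mul_le_mul_of_nonneg_right (hA N) (norm_nonneg w))
      have h4 : ‖w - (A ^ N) w‖ ≤ (1 + M) * ‖w‖ :=
        le_trans (norm_sub_le _ _) (by linarith)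
      have h5 : ‖(N : ℝ)⁻¹‖ = (N : ℝ)⁻¹ := by
        simp [Real.norm_eq_abs, abs_of_nonneg]
      rw [h5]
      exact mul_le_mul_of_nonneg_left h4 (by positivity)
    have hlim : Tendsto (fun N : ℕ => (N : ℝ)⁻¹ * ((1 + M) * ‖w‖)) atTop (𝓝 0) := by
      simpa using tendsto_inv_atTop_nhds_zero_nat.mul_const ((1 + M) * ‖w‖)
    refine squeeze_zero_norm (fun N => ?_) hlim
    rw [heq N]; exact hnorm N
  -- combine
  have hsum : ∀ N : ℕ, (N : ℝ)⁻¹ • ∑ n ∈ Finset.range N, (A ^ n) x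
      = ((N : ℝ)⁻¹ • ∑ n ∈ Finset.range N, (A ^ n) (Q x))
        + ((N : ℝ)⁻¹ • ∑ n ∈ Finset.range N, (A ^ n) (x - Q x)) := by
    intro N
    rw [← smul_add, ← Finset.sum_add_distrib]
    congr 1
    refine Finset.sum_congr rfl fun n _ => ?_
    rw [← map_add]
    congr 1
    abel
  have := h1.add h2
  rw [add_zero] at this
  exact this.congr fun N => (hsum N).symm

end OpAux

/-- If the joint probabilities of a measurement process are given by
`P(X_n ∈ S, n = k,…,k+l) = ⟨ψ, T^{k−1} T_S^{l+1} ψ⟩` with mixed products of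
`T`, `T_S` uniformly power-bounded on a finite-dimensional Hilbert space, then
`P(X_n ∈ S eventually) = ⟨ψ, Π Π_S ψ⟩`, where `Π`, `Π_S` are the Riesz
projections of `T`, `T_S` at the eigenvalue `1`. -/
theorem stmt_9 {H : Type*} [NormedAddCommGroup H] [InnerProductSpace ℂ H]
    [FiniteDimensional ℂ H]
    (T TS : H →L[ℂ] H) (ψ : H) (M : ℝ)
    (hM : ∀ a b : ℕ, ‖T ^ a * TS ^ b‖ ≤ M)
    -- Riesz projection of T at 1
    (RP : H →L[ℂ] H) (hRPidem : RP * RP = RP)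
    (hRPrange : LinearMap.range (RP : H →ₗ[ℂ] H)
      = LinearMap.ker (((1 - T) ^ (Module.finrank ℂ H) : H →L[ℂ] H) : H →ₗ[ℂ] H))
    (hRPker : LinearMap.ker (RP : H →ₗ[ℂ] H)
      = LinearMap.range (((1 - T) ^ (Module.finrank ℂ H) : H →L[ℂ] H) : H →ₗ[ℂ] H))
    -- Riesz projection of TS at 1
    (RPS : H →L[ℂ] H) (hRPSidem : RPS * RPS = RPS)
    (hRPSrange : LinearMap.range (RPS : H →ₗ[ℂ] H)
      = LinearMap.ker (((1 - TS) ^ (Module.finrank ℂ H) : H →L[ℂ] H) : H →ₗ[ℂ] H))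
    (hRPSker : LinearMap.ker (RPS : H →ₗ[ℂ] H)
      = LinearMap.range (((1 - TS) ^ (Module.finrank ℂ H) : H →L[ℂ] H) : H →ₗ[ℂ] H))
    -- the measurement process
    {Ω : Type*} [MeasurableSpace Ω] (P : Measure Ω) [IsProbabilityMeasure P]
    {V : Type*} [Fintype V] [MeasurableSpace V] [MeasurableSingletonClass V]
    (X : ℕ → Ω → V) (hX : ∀ n, Measurable (X n)) (S : Set V)
    (hprob : ∀ k l : ℕ, 1 ≤ k →
      ((P {ω | ∀ n ∈ Finset.Icc k (k + l), X n ω ∈ S}).toReal : ℂ)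
        = (inner ℂ ψ (((T ^ (k - 1)) * TS ^ (l + 1)) ψ) : ℂ)) :
    ((P {ω | ∃ k : ℕ, ∀ n ≥ k, X n ω ∈ S}).toReal : ℂ)
      = (inner ℂ ψ ((RP * RPS) ψ) : ℂ) := by
  classical
  set d := Module.finrank ℂ H with hdd
  have hMT : ∀ n : ℕ, ‖T ^ n‖ ≤ M := fun n => by
    have h := hM n 0; rwa [pow_zero, mul_one] at h
  have hMS : ∀ n : ℕ, ‖TS ^ n‖ ≤ M := fun n => by
    have h := hM 0 n; rwa [pow_zero, one_mul] at h
  have hdor : Subsingleton H ∨ 0 < d := by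
    rcases Nat.eq_zero_or_pos d with h | h
    · left; exact Module.finrank_zero_iff.mp h
    · right; exact h
  have hS : MeasurableSet S := S.toFinite.measurableSet
  set A : ℕ → Set Ω := fun k => {ω | ∀ n, k ≤ n → X n ω ∈ S} with hA
  set B : ℕ → ℕ → Set Ω := fun k l => {ω | ∀ n ∈ Finset.Icc k (k + l), X n ω ∈ S}
    with hB
  have hmeasB : ∀ k l, MeasurableSet (B k l) := by
    intro k l
    have h : B k l = ⋂ n ∈ Finset.Icc k (k + l), X n ⁻¹' S := by
      ext ω; simp [hB]
    rw [h]
    exact MeasurableSet.biInter (Set.to_countable _) fun n _ => (hX n) hS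
  set φ : H := RPS ψ with hφ
  have key1 : ∀ k : ℕ, ((P (A (k + 1))).toReal : ℂ) = inner ℂ ψ ((T ^ k) φ) := by
    intro k
    have hInter : (⋂ l, B (k + 1) l) = A (k + 1) := by
      ext ω
      simp only [Set.mem_iInter, hA, hB, Set.mem_setOf_eq, Finset.mem_Icc]
      constructor
      · intro h n hn
        exact h (n - (k + 1)) n ⟨hn, by omega⟩
      · intro h l n hn
        exact h n hn.1
    have hanti : Antitone fun l => B (k + 1) l := by
      intro l1 l2 hl ω hω n hn
      refine hω n ?_
      simp only [hB, Finset.mem_Icc] at hn ⊢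
      omega
    have hlim1 : Tendsto (fun l => P (B (k + 1) l)) atTop (𝓝 (P (A (k + 1)))) := by
      rw [← hInter]
      exact tendsto_measure_iInter_atTop (fun l => (hmeasB _ _).nullMeasurableSet)
        hanti ⟨0, measure_ne_top P _⟩
    have hlim2 : Tendsto (fun l : ℕ => ((P (B (k + 1) l)).toReal : ℂ)) atTop
        (𝓝 ((P (A (k + 1))).toReal : ℂ)) :=
      (Complex.continuous_ofReal.tendsto _).comp
        (((ENNReal.tendsto_toReal (measure_ne_top P _)).comp hlim1))
    have hprob' : ∀ l : ℕ, ((P (B (k + 1) l)).toReal : ℂ)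
        = inner ℂ ψ ((T ^ k) ((TS ^ (l + 1)) ψ)) := by
      intro l
      have h := hprob (k + 1) l (Nat.le_add_left 1 k)
      have hBeq : {ω | ∀ n ∈ Finset.Icc (k + 1) ((k + 1) + l), X n ω ∈ S}
          = B (k + 1) l := rfl
      rw [hBeq] at h
      simpa [ContinuousLinearMap.mul_apply, Nat.add_sub_cancel] using h
    have hces : Tendsto (fun N : ℕ => (N : ℝ)⁻¹ • ∑ n ∈ Finset.range N, (TS ^ n) ψ)
        atTop (𝓝 φ) := by
      have h := cesaro_proj TS RPS M hMS hRPSidem d hdor hRPSrange hRPSker ψ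
      exact h
    have hTSfix : TS φ = φ := by
      apply fix_of_pow TS M hMS d
      have h : φ ∈ LinearMap.ker (((1 - TS) ^ d : H →L[ℂ] H) : H →ₗ[ℂ] H) := by
        rw [← hRPSrange]; exact LinearMap.mem_range_self _ ψ
      exact h
    have hcomp : Tendsto (fun N : ℕ =>
        (inner ℂ ψ ((T ^ k) (TS ((N : ℝ)⁻¹ • ∑ n ∈ Finset.range N, (TS ^ n) ψ))) : ℂ))
        atTop (𝓝 (inner ℂ ψ ((T ^ k) (TS φ)))) := by
      have hc : Continuous fun v : H => (inner ℂ ψ ((T ^ k) (TS v)) : ℂ) :=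
        Continuous.inner continuous_const (((T ^ k).continuous).comp TS.continuous)
      exact (hc.tendsto φ).comp hces
    rw [hTSfix] at hcomp
    have hscal : Tendsto (fun l : ℕ => (inner ℂ ψ ((T ^ k) ((TS ^ (l + 1)) ψ)) : ℂ))
        atTop (𝓝 ((P (A (k + 1))).toReal : ℂ)) := hlim2.congr fun l => hprob' l
    have hscal2 := hscal.cesaro_smul
    have hident : ∀ N : ℕ, ((N : ℝ)⁻¹ • ∑ l ∈ Finset.range N,
          (inner ℂ ψ ((T ^ k) ((TS ^ (l + 1)) ψ)) : ℂ))
        = inner ℂ ψ ((T ^ k) (TS ((N : ℝ)⁻¹ • ∑ n ∈ Finset.range N, (TS ^ n) ψ))) := by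
      intro N
      have h1 : ∑ l ∈ Finset.range N, (TS ^ (l + 1)) ψ
          = TS (∑ n ∈ Finset.range N, (TS ^ n) ψ) := by
        rw [map_sum]
        exact Finset.sum_congr rfl fun l _ => by
          rw [pow_succ', ContinuousLinearMap.mul_apply]
      rw [Complex.real_smul, ContinuousLinearMap.map_smul_of_tower,
        ContinuousLinearMap.map_smul_of_tower, ← Complex.coe_smul, inner_smul_right,
        ← h1, map_sum, inner_sum]
    exact tendsto_nhds_unique (hscal2.congr hident) hcomp
  have hmono : Monotone A := fun k1 k2 h ω hω n hn => hω n (le_trans h hn)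
  have hE : {ω | ∃ k : ℕ, ∀ n ≥ k, X n ω ∈ S} = ⋃ k, A k := by
    ext ω; simp [hA, Set.mem_iUnion]
  have hlimE : Tendsto (fun k => P (A k)) atTop (𝓝 (P (⋃ k, A k))) :=
    tendsto_measure_iUnion_atTop hmono
  have hlimE1 : Tendsto (fun k : ℕ => ((P (A (k + 1))).toReal : ℂ)) atTop
      (𝓝 ((P (⋃ k, A k)).toReal : ℂ)) := by
    have h := (Complex.continuous_ofReal.tendsto _).comp
      (((ENNReal.tendsto_toReal (measure_ne_top P _)).comp hlimE))
    exact h.comp (tendsto_add_atTop_nat 1)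
  have key3 : Tendsto (fun k : ℕ => (inner ℂ ψ ((T ^ k) φ) : ℂ)) atTop
      (𝓝 ((P (⋃ k, A k)).toReal : ℂ)) := hlimE1.congr fun k => key1 k
  have hces2 := key3.cesaro_smul
  have hcesT : Tendsto (fun N : ℕ => (N : ℝ)⁻¹ • ∑ n ∈ Finset.range N, (T ^ n) φ)
      atTop (𝓝 (RP φ)) := cesaro_proj T RP M hMT hRPidem d hdor hRPrange hRPker φ
  have hcomp2 : Tendsto
      (fun N : ℕ => (inner ℂ ψ ((N : ℝ)⁻¹ • ∑ n ∈ Finset.range N, (T ^ n) φ) : ℂ))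
      atTop (𝓝 (inner ℂ ψ (RP φ))) :=
    ((Continuous.inner continuous_const continuous_id).tendsto _).comp hcesT
  have hident2 : ∀ N : ℕ, ((N : ℝ)⁻¹ • ∑ n ∈ Finset.range N,
        (inner ℂ ψ ((T ^ n) φ) : ℂ))
      = inner ℂ ψ ((N : ℝ)⁻¹ • ∑ n ∈ Finset.range N, (T ^ n) φ) := by
    intro N
    rw [Complex.real_smul, ← Complex.coe_smul, inner_smul_right, inner_sum]
  have hfinal : ((P (⋃ k, A k)).toReal : ℂ) = inner ℂ ψ (RP φ) :=
    tendsto_nhds_unique (hces2.congr hident2) hcomp2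
  rw [hE, hfinal, hφ, ContinuousLinearMap.mul_apply]
end
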